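/- If N is a Nijenhuis operator on an associative algebra (A, μ), then (A, μ, μ_N) is a compatible associative algebra, i.e. μ_N is associative and the compatibility condition (a·b)·_N c + (a·_N b)·c = a·(b·_N c) + a·_N (b·c) holds. -/
import Mathlib


/-- If `N` is a Nijenhuis operator on an associative algebra `(A, μ)`, then `(A, μ, μ_N)`
is a compatible associative algebra: `μ_N` is associative and the compatibility condition
`(a·b)·_N c + (a·_N b)·c = a·(b·_N c) + a·_N (b·c)` holds. -/
theorem nijenhuis_gives_compatible_associative
    {K A : Type*} [Field K] [CharZero K] [AddCommGroup A] [Module K A]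
    (μ : A →ₗ[K] A →ₗ[K] A)
    (hassoc : ∀ a b c : A, μ (μ a b) c = μ a (μ b c))
    (N : A →ₗ[K] A)
    (hN : ∀ a b : A, μ (N a) (N b) = N (μ (N a) b + μ a (N b) - N (μ a b)))
    (μN : A → A → A)
    (hμN : ∀ a b : A, μN a b = μ (N a) b + μ a (N b) - N (μ a b)) :
    (∀ a b c : A, μN (μN a b) c = μN a (μN b c)) ∧
    (∀ a b c : A, μN (μ a b) c + μ (μN a b) c = μ a (μN b c) + μN a (μ b c)) := by
  constructor <;> intro a b c <;>
  · simp only [hμN, map_add, map_sub, LinearMap.add_apply, LinearMap.sub_apply,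
      ← hN, hassoc]
    try simp only [hN, map_add, map_sub, hassoc]
    abel
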